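/- arXiv:0911.4277 — 2 statements merged into one kernel-verified Lean document; each statement's English description precedes it below -/
import Mathlib

section
/- Let w, k, and b be positive integers with k ≤ w. If B is a block of length k in base b+1, then N(B, P_{b,w}) ≤ w·(2^b − b)^{g_b(B)}·2^{b(w−k)} + (k−1)·(b+1)^w. -/
/-- The one-digit weighting `ν_b^{(1)}`: `1/2^b` for `j < b`, `(2^b - b)/2^b` for `j = b`,
and `0` for `j > b`. -/
noncomputable def nu1 (b j : ℕ) : ℝ :=
  if j < b then 1 / 2 ^ b else if j = b then (2 ^ b - b) / 2 ^ b else 0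

/-- The weighting `ν_b` of a block `B = (b_1, …, b_k)`: `∏_j ν_b^{(1)}(b_j)`. -/
noncomputable def nu (b : ℕ) (B : List ℕ) : ℝ := (B.map (nu1 b)).prod

/-- The `i`-th (0-indexed) block of length `w` in base `b`, in lexicographic order. -/
def lexBlock (b w i : ℕ) : List ℕ :=
  (List.range w).map (fun j => i / b ^ (w - 1 - j) % b)

/-- The block `P_{b,w}`: running over the blocks `P` of length `w` in base `b+1` in
lexicographic order, concatenate `2^{bw}·ν_b(P) = (2^b - b)^{g_b(P)}` copies of each `P`. -/
def Pblock (b w : ℕ) : List ℕ :=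
  ((List.range ((b + 1) ^ w)).map fun i =>
    (List.replicate ((2 ^ b - b) ^ ((lexBlock (b + 1) w i).count b))
      (lexBlock (b + 1) w i)).flatten).flatten

/-- `numOcc B y` is the number of occurrences of the block `B` as a contiguous
subblock of the block `y`. -/
def numOcc (B y : List ℕ) : ℕ :=
  ((List.range (y.length + 1)).filter (fun i => B.isPrefixOf (y.drop i))).length



lemma filter_card (p : ℕ → Bool) (n : ℕ) :
    ((Finset.range n).filter (fun i => p i)).card = ((List.range n).filter p).length := by
  simp [Finset.filter, Finset.range, Multiset.range, Multiset.filter_coe]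

lemma numOcc_eq (B y : List ℕ) :
    numOcc B y = ((Finset.range (y.length+1)).filter (fun i => B.isPrefixOf (y.drop i))).card :=
  (filter_card _ _).symm

lemma prefix_of_prefix_append {B a c : List ℕ} (h : B <+: a ++ c) (hl : B.length ≤ a.length) :
    B <+: a := by
  rw [List.prefix_iff_eq_take] at h
  rw [List.take_append, Nat.sub_eq_zero_of_le hl, List.take_zero,
    List.append_nil] at h
  rw [h]
  exact List.take_prefix _ _

lemma numOcc_append_le (B x y : List ℕ) (hk : 0 < B.length) :
    numOcc B (x ++ y) ≤ numOcc B x + numOcc B y + (B.length - 1) := by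
  set k := B.length
  rw [numOcc_eq, numOcc_eq, numOcc_eq]
  have hsub : (Finset.range ((x++y).length+1)).filter (fun i => B.isPrefixOf ((x++y).drop i)) ⊆
      ((Finset.range (x.length+1)).filter (fun i => B.isPrefixOf (x.drop i))) ∪
      (((Finset.range (y.length+1)).filter (fun i => B.isPrefixOf (y.drop i))).image (· + x.length)) ∪
      (Finset.Ico (x.length + 1 - k) x.length) := by
    intro i hi
    simp only [Finset.mem_filter, Finset.mem_range, List.length_append] at hi
    obtain ⟨hir, hip⟩ := hi
    simp only [Finset.mem_union, Finset.mem_filter, Finset.mem_range, Finset.mem_image,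
      Finset.mem_Ico]
    rcases le_or_gt x.length i with hxi | hxi
    · refine Or.inl (Or.inr ⟨i - x.length, ⟨by omega, ?_⟩, by omega⟩)
      have : (x++y).drop i = y.drop (i - x.length) := by
        rw [List.drop_append, List.drop_of_length_le (by omega), List.nil_append]
      rwa [this] at hip
    · rcases le_or_gt (i + k) x.length with hik | hik
      · refine Or.inl (Or.inl ⟨by omega, ?_⟩)
        have hd : (x++y).drop i = x.drop i ++ y := by
          rw [List.drop_append, Nat.sub_eq_zero_of_le (by omega), List.drop_zero]
        rw [hd] at hip
        rw [List.isPrefixOf_iff_prefix] at hip ⊢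
        exact prefix_of_prefix_append hip (by simp; omega)
      · exact Or.inr ⟨by omega, hxi⟩
  calc _ ≤ _ := Finset.card_le_card hsub
    _ ≤ _ := by
        refine le_trans (Finset.card_union_le _ _) ?_
        have h1 := Finset.card_union_le
          ((Finset.range (x.length+1)).filter (fun i => B.isPrefixOf (x.drop i)))
          (((Finset.range (y.length+1)).filter (fun i => B.isPrefixOf (y.drop i))).image (· + x.length))
        have h2 := Finset.card_image_le (s := (Finset.range (y.length+1)).filter (fun i => B.isPrefixOf (y.drop i))) (f := (· + x.length))
        have h3 : (Finset.Ico (x.length + 1 - k) x.length).card ≤ k - 1 := by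
          rw [Nat.card_Ico]; omega
        omega

lemma numOcc_nil (B : List ℕ) (hk : 0 < B.length) : numOcc B [] = 0 := by
  cases B with
  | nil => simp at hk
  | cons a t => simp [numOcc, List.isPrefixOf]

lemma numOcc_flatten_le (B : List ℕ) (hk : 0 < B.length) (L : List (List ℕ)) :
    numOcc B L.flatten ≤ (L.map (numOcc B)).sum + (B.length - 1) * L.length := by
  induction L with
  | nil => simp [numOcc_nil B hk]
  | cons l L ih =>
      rw [List.flatten_cons]
      calc numOcc B (l ++ L.flatten) ≤ numOcc B l + numOcc B L.flatten + (B.length - 1) :=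
            numOcc_append_le B l L.flatten hk
        _ ≤ _ := by simp only [List.map_cons, List.sum_cons, List.length_cons]; rw [Nat.mul_succ]; omega



lemma drop_flatten_replicate (P : List ℕ) (w : ℕ) (hP : P.length = w) :
    ∀ q m, List.drop (q * w) (List.replicate m P).flatten = (List.replicate (m - q) P).flatten := by
  intro q
  induction q with
  | zero => simp
  | succ q ih =>
      intro m
      cases m with
      | zero => simp
      | succ m =>
          have h1 : (q+1) * w = w + q * w := by ring
          rw [h1, ← List.drop_drop, List.replicate_succ, List.flatten_cons,
            List.drop_append_of_le_length (le_of_eq hP.symm),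
            List.drop_of_length_le (le_of_eq hP), List.nil_append, ih, Nat.succ_sub_succ]

lemma prefix_PP (B P : List ℕ) (w r : ℕ) (hP : P.length = w) (hr : r < w)
    (hkw : B.length ≤ w) (n : ℕ) (hn : 2 ≤ n)
    (h : B <+: List.drop r (List.replicate n P).flatten) : B <+: List.drop r (P ++ P) := by
  obtain ⟨n, rfl⟩ : ∃ m, n = m + 2 := ⟨n - 2, by omega⟩
  have hflat : (List.replicate (n+2) P).flatten = (P ++ P) ++ (List.replicate n P).flatten := by
    rw [List.replicate_succ, List.replicate_succ, List.flatten_cons, List.flatten_cons,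
      List.append_assoc]
  rw [hflat, List.drop_append_of_le_length (by simp [hP]; omega)] at h
  exact prefix_of_prefix_append h (by simp [hP]; omega)

lemma prefix_mono_flatten (B P : List ℕ) (r m : ℕ)
    (h : B <+: List.drop r (List.replicate m P).flatten) :
    B <+: List.drop r (List.replicate (m+1) P).flatten := by
  refine h.trans (List.IsPrefix.drop ?_ r)
  rw [List.replicate_succ' , List.flatten_append]
  exact List.prefix_append _ _


lemma numOcc_period_le' (B P : List ℕ) (w m : ℕ) (hP : P.length = w) (hw : 0 < w)
    (hk : 0 < B.length) (hkw : B.length ≤ w) :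
    ((Finset.range ((List.replicate m P).flatten.length + 1)).filter
        (fun i => B.isPrefixOf ((List.replicate m P).flatten.drop i))).card ≤
      m * ((Finset.range w).filter (fun r => B.isPrefixOf ((P ++ P).drop r))).card := by
  set y := (List.replicate m P).flatten with hy
  have hylen : y.length = m * w := by
    simp [hy, List.length_flatten, List.map_replicate, List.sum_replicate, smul_eq_mul, hP]
  have hcard : m * ((Finset.range w).filter (fun r => B.isPrefixOf ((P ++ P).drop r))).card
      = ((Finset.range m) ×ˢ ((Finset.range w).filter (fun r => B.isPrefixOf ((P ++ P).drop r)))).card := by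
    rw [Finset.card_product, Finset.card_range]
  rw [hcard]
  apply Finset.card_le_card_of_injOn (fun i => (i / w, i % w))
  · intro i hi
    simp only [Finset.mem_coe, Finset.mem_filter, Finset.mem_range] at hi
    obtain ⟨hir, hip⟩ := hi
    rw [List.isPrefixOf_iff_prefix] at hip
    have hlen2 : B.length ≤ y.length - i := by
      have := hip.length_le
      simpa using this
    have hik : i + B.length ≤ m * w := by omega
    have hq : i / w < m := by
      rw [Nat.div_lt_iff_lt_mul hw]; omega
    have hrr : i % w < w := Nat.mod_lt _ hw
    simp only [Finset.mem_coe, Finset.mem_product, Finset.mem_filter, Finset.mem_range]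
    refine ⟨hq, hrr, ?_⟩
    rw [List.isPrefixOf_iff_prefix]
    have hdrop : y.drop i = List.drop (i % w) (List.replicate (m - i / w) P).flatten := by
      rw [← drop_flatten_replicate P w hP, List.drop_drop]
      congr 1
      rw [mul_comm]
      exact (Nat.div_add_mod i w).symm
    rw [hdrop] at hip
    have hip2 := prefix_mono_flatten _ _ _ _ (prefix_mono_flatten _ _ _ _ hip)
    exact prefix_PP B P w (i % w) hP hrr hkw _ (by omega) hip2
  · intro a ha b hb hab
    simp only [Prod.mk.injEq] at hab
    have ha' := Nat.div_add_mod a w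
    have hb' := Nat.div_add_mod b w
    have hq : w * (a / w) = w * (b / w) := by rw [hab.1]
    omega




def wtD (b d : ℕ) : ℕ := if d = b then 2 ^ b - b else 1

def Wb (b : ℕ) (P : List ℕ) : ℕ := (P.map (wtD b)).prod

def mmatch : List (Option ℕ) → List ℕ → Bool
  | [], [] => true
  | o :: M, d :: P => (o.elim true (· == d)) && mmatch M P
  | _, _ => false

def mW (b c : ℕ) (o : Option ℕ) : ℕ := o.elim (∑ d ∈ Finset.range c, wtD b d) (wtD b)

lemma Wb_eq_pow_count (b : ℕ) (P : List ℕ) : Wb b P = (2 ^ b - b) ^ (P.count b) := by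
  induction P with
  | nil => simp [Wb]
  | cons d P ih =>
      rw [Wb, List.map_cons, List.prod_cons, ← Wb, ih, List.count_cons]
      by_cases h : d = b
      · simp [wtD, h, pow_succ, mul_comm]
      · simp [wtD, h, Ne.symm h]

lemma Wb_append (b : ℕ) (P Q : List ℕ) : Wb b (P ++ Q) = Wb b P * Wb b Q := by
  simp [Wb]

lemma lexBlock_length (b w i : ℕ) : (lexBlock b w i).length = w := by simp [lexBlock]

lemma lexBlock_cons (c w i : ℕ) (hc : 0 < c) :
    lexBlock c (w + 1) i = (i / c ^ w % c) :: lexBlock c w (i % c ^ w) := by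
  rw [lexBlock, lexBlock, List.range_succ_eq_map, List.map_cons, List.map_map]
  refine congrArg₂ List.cons (by norm_num) ?_
  apply List.map_congr_left
  intro j hj
  rw [List.mem_range] at hj
  show i / c ^ (w + 1 - 1 - (j + 1)) % c = i % c ^ w / c ^ (w - 1 - j) % c
  have h1 : w + 1 - 1 - (j + 1) = w - 1 - j := by omega
  rw [h1]
  set e := w - 1 - j with he
  have hsplit : c ^ w = c ^ e * c ^ (w - e) := by rw [← pow_add]; congr 1; omega
  rw [hsplit, Nat.mod_mul_right_div_self, Nat.mod_mod_of_dvd]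
  exact dvd_pow_self c (by omega)

lemma mmatch_append (M1 M2 : List (Option ℕ)) (P1 P2 : List ℕ) (h : M1.length = P1.length) :
    mmatch (M1 ++ M2) (P1 ++ P2) = (mmatch M1 P1 && mmatch M2 P2) := by
  induction M1 generalizing P1 with
  | nil => cases P1 with
    | nil => simp [mmatch]
    | cons a t => simp at h
  | cons o M ih =>
      cases P1 with
      | nil => simp at h
      | cons d P =>
          simp only [List.cons_append, mmatch]
          rw [ih P (by simpa using h), Bool.and_assoc]

lemma mmatch_replicate_none (P : List ℕ) : mmatch (List.replicate P.length none) P = true := by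
  induction P with
  | nil => rfl
  | cons d P ih => simpa [List.replicate_succ, mmatch]

lemma mmatch_map_some (P : List ℕ) : mmatch (P.map some) P = true := by
  induction P with
  | nil => rfl
  | cons d P ih => simpa [mmatch]

lemma reindex_sum (c w : ℕ) (hc : 0 < c) (f : ℕ → ℕ) :
    ∑ i ∈ Finset.range (c ^ (w + 1)), f i =
    ∑ p ∈ Finset.range c ×ˢ Finset.range (c ^ w), f (p.1 * c ^ w + p.2) := by
  have hcw : 0 < c ^ w := pow_pos hc w
  refine Finset.sum_nbij' (i := fun n => (n / c ^ w, n % c ^ w))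
    (j := fun p => p.1 * c ^ w + p.2) ?_ ?_ ?_ ?_ ?_
  · intro n hn
    rw [Finset.mem_range] at hn
    simp only [Finset.mem_product, Finset.mem_range]
    constructor
    · rw [Nat.div_lt_iff_lt_mul hcw]
      calc n < c ^ (w+1) := hn
        _ = c * c ^ w := by ring
    · exact Nat.mod_lt _ hcw
  · intro p hp
    simp only [Finset.mem_product, Finset.mem_range] at hp
    rw [Finset.mem_range]
    calc p.1 * c ^ w + p.2 < p.1 * c ^ w + c ^ w := by omega
      _ = (p.1 + 1) * c ^ w := by ring
      _ ≤ c * c ^ w := Nat.mul_le_mul_right _ (by omega)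
      _ = c ^ (w + 1) := by ring
  · intro n hn
    show n / c ^ w * c ^ w + n % c ^ w = n
    rw [mul_comm]
    exact Nat.div_add_mod n (c ^ w)
  · intro p hp
    simp only [Finset.mem_product, Finset.mem_range] at hp
    have h1 : (p.1 * c ^ w + p.2) / c ^ w = p.1 := by
      rw [mul_comm, Nat.mul_add_div hcw, Nat.div_eq_of_lt hp.2, Nat.add_zero]
    have h2 : (p.1 * c ^ w + p.2) % c ^ w = p.2 := by
      rw [mul_comm, Nat.mul_add_mod, Nat.mod_eq_of_lt hp.2]
    simp [h1, h2]
  · intro n hn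
    have h3 : n / c ^ w * c ^ w + n % c ^ w = n := by
      rw [mul_comm]; exact Nat.div_add_mod n (c ^ w)
    show f n = f (n / c ^ w * c ^ w + n % c ^ w)
    rw [h3]

lemma mainSum (b c : ℕ) (hc : 0 < c) (M : List (Option ℕ)) :
    (∑ i ∈ Finset.range (c ^ M.length),
      if mmatch M (lexBlock c M.length i) then Wb b (lexBlock c M.length i) else 0)
    ≤ (M.map (mW b c)).prod := by
  induction M with
  | nil => simp [lexBlock, mmatch, Wb]
  | cons o M ih =>
      set w := M.length with hwdef
      have hcw : 0 < c ^ w := pow_pos hc w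
      have hlen : (o :: M).length = w + 1 := by simp [hwdef]
      rw [hlen, reindex_sum c w hc, Finset.sum_product]
      have hterm : ∀ d ∈ Finset.range c, ∀ s ∈ Finset.range (c ^ w),
          (if mmatch (o :: M) (lexBlock c (w+1) (d * c ^ w + s)) then
            Wb b (lexBlock c (w+1) (d * c ^ w + s)) else 0) =
          (if (o.elim true (· == d) : Bool) then wtD b d else 0) *
          (if mmatch M (lexBlock c w s) then Wb b (lexBlock c w s) else 0) := by
        intro d hd s hs
        rw [Finset.mem_range] at hd hs
        have hdecomp : lexBlock c (w+1) (d * c ^ w + s) = d :: lexBlock c w s := by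
          rw [lexBlock_cons c w _ hc]
          have h1 : (d * c ^ w + s) / c ^ w = d := by
            rw [mul_comm, Nat.mul_add_div hcw, Nat.div_eq_of_lt hs, Nat.add_zero]
          have h2 : (d * c ^ w + s) % c ^ w = s := by
            rw [mul_comm, Nat.mul_add_mod, Nat.mod_eq_of_lt hs]
          rw [h1, h2, Nat.mod_eq_of_lt hd]
        rw [hdecomp]
        cases h1 : (o.elim true (· == d) : Bool) <;>
          cases h2 : mmatch M (lexBlock c w s) <;>
          simp [mmatch, Wb, h1, h2]
      calc (∑ d ∈ Finset.range c, ∑ s ∈ Finset.range (c ^ w),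
              if mmatch (o :: M) (lexBlock c (w+1) (d * c ^ w + s)) then
                Wb b (lexBlock c (w+1) (d * c ^ w + s)) else 0)
          = (∑ d ∈ Finset.range c, (if (o.elim true (· == d) : Bool) then wtD b d else 0)) *
            (∑ s ∈ Finset.range (c ^ w),
              if mmatch M (lexBlock c w s) then Wb b (lexBlock c w s) else 0) := by
            rw [Finset.sum_mul_sum]
            exact Finset.sum_congr rfl fun d hd =>
              Finset.sum_congr rfl fun s hs => hterm d hd s hs
        _ ≤ mW b c o * (M.map (mW b c)).prod := by
            apply Nat.mul_le_mul _ ih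
            cases o with
            | none => simp [mW]
            | some a =>
                have : ∀ d, ((some a).elim true (· == d) : Bool) = (a = d : Prop) := by
                  intro d; simp
                calc (∑ d ∈ Finset.range c, if ((some a).elim true (· == d) : Bool) then wtD b d else 0)
                    = ∑ d ∈ Finset.range c, if a = d then wtD b d else 0 := by
                      refine Finset.sum_congr rfl fun d _ => ?_
                      congr 1
                      · simp
                  _ = if a ∈ Finset.range c then wtD b a else 0 := Finset.sum_ite_eq _ a _
                  _ ≤ wtD b a := by split <;> simp [mW]
                  _ = mW b c (some a) := rfl
        _ = ((o :: M).map (mW b c)).prod := by simp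

lemma mmatch_ns (X mid1 mid2 : List ℕ) :
    mmatch (List.replicate mid1.length none ++ (X.map some ++ List.replicate mid2.length none))
      (mid1 ++ (X ++ mid2)) = true := by
  rw [mmatch_append _ _ _ _ (by simp), mmatch_append _ _ _ _ (by simp),
    mmatch_replicate_none, mmatch_map_some, mmatch_replicate_none]
  rfl

lemma mmatch_sn (X Y mid : List ℕ) :
    mmatch (X.map some ++ (List.replicate mid.length none ++ Y.map some))
      (X ++ (mid ++ Y)) = true := by
  rw [mmatch_append _ _ _ _ (by simp), mmatch_append _ _ _ _ (by simp),
    mmatch_replicate_none, mmatch_map_some, mmatch_map_some]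
  rfl

lemma sum_wtD (b : ℕ) : ∑ d ∈ Finset.range (b+1), wtD b d = 2 ^ b := by
  rw [Finset.sum_range_succ]
  have h1 : ∑ d ∈ Finset.range b, wtD b d = b := by
    have hterm : ∀ d ∈ Finset.range b, wtD b d = 1 := fun d hd => by
      rw [Finset.mem_range] at hd
      simp [wtD, Nat.ne_of_lt hd]
    rw [Finset.sum_congr rfl hterm]
    simp
  have h2 : b < 2 ^ b := Nat.lt_two_pow_self
  have h3 : wtD b b = 2 ^ b - b := by simp [wtD]
  rw [h1, h3]
  omega

lemma perR_aux (b c w : ℕ) (hc : 0 < c) (M : List (Option ℕ)) (hMlen : M.length = w)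
    (cond : ℕ → Bool)
    (hmm : ∀ i ∈ Finset.range (c ^ w), cond i = true → mmatch M (lexBlock c w i) = true) :
    (∑ i ∈ Finset.range (c ^ w), if cond i then Wb b (lexBlock c w i) else 0) ≤
      (M.map (mW b c)).prod := by
  subst hMlen
  refine le_trans (Finset.sum_le_sum (fun i hi => ?_)) (mainSum b c hc M)
  by_cases h : cond i = true
  · rw [if_pos h, hmm i hi h, if_pos rfl]
  · rw [if_neg h]; exact Nat.zero_le _

lemma drop_PP (P : List ℕ) (w r : ℕ) (hP : P.length = w) (hr : r < w) :
    (P ++ P).drop r = P.drop r ++ P := by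
  rw [List.drop_append, Nat.sub_eq_zero_of_le (by omega : r ≤ P.length),
    List.drop_zero]

lemma perR (b w k r : ℕ) (B : List ℕ) (hb : 0 < b) (hw : 0 < w) (hk : 0 < k) (hkw : k ≤ w)
    (hlen : B.length = k) (hr : r < w) :
    (∑ i ∈ Finset.range ((b+1) ^ w),
      if B.isPrefixOf (((lexBlock (b+1) w i) ++ (lexBlock (b+1) w i)).drop r)
      then Wb b (lexBlock (b+1) w i) else 0)
    ≤ (2 ^ b - b) ^ (B.count b) * 2 ^ (b * (w - k)) := by
  have hc : 0 < b + 1 := by omega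
  by_cases hcase : r + k ≤ w
  · set M : List (Option ℕ) :=
      List.replicate r none ++ (B.map some ++ List.replicate (w - (r + k)) none) with hM
    have hMlen : M.length = w := by simp [hM, hlen]; omega
    refine le_trans (perR_aux b (b+1) w hc M hMlen _ ?_) (le_of_eq ?_)
    · intro i hi hcond
      set P := lexBlock (b+1) w i with hPdef
      have hP : P.length = w := lexBlock_length _ _ _
      rw [List.isPrefixOf_iff_prefix, drop_PP P w r hP hr] at hcond
      have hBpre : B <+: P.drop r :=
        prefix_of_prefix_append hcond (by rw [hlen, List.length_drop, hP]; omega)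
      have hBtake : (P.drop r).take k = B := by
        rw [← hlen]; exact (List.prefix_iff_eq_take.mp hBpre).symm
      have hPdec : P = P.take r ++ (B ++ P.drop (r + k)) := by
        conv_lhs => rw [← List.take_append_drop r P, ← List.take_append_drop k (P.drop r)]
        rw [hBtake, List.drop_drop]
      have hl1 : (P.take r).length = r := by rw [List.length_take, hP]; omega
      have hl2 : (P.drop (r + k)).length = w - (r + k) := by rw [List.length_drop, hP]
      have hres := mmatch_ns B (P.take r) (P.drop (r + k))
      rw [← hPdec, hl1, hl2] at hres
      rw [hM]
      exact hres
    · have hcomp : (mW b (b+1)) ∘ some = wtD b := funext fun a => rfl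
      rw [hM]
      rw [List.map_append, List.map_append, List.prod_append, List.prod_append,
        List.map_replicate, List.map_replicate, List.prod_replicate, List.prod_replicate,
        List.map_map, hcomp]
      show (mW b (b+1) none) ^ r * ((Wb b B) * (mW b (b+1) none) ^ (w - (r+k))) = _
      have hnone : mW b (b+1) none = 2 ^ b := sum_wtD b
      rw [hnone, Wb_eq_pow_count]
      have h5 : r + (w - (r + k)) = w - k := by omega
      calc (2^b : ℕ) ^ r * ((2 ^ b - b) ^ B.count b * (2^b) ^ (w - (r+k)))
          = (2 ^ b - b) ^ B.count b * ((2^b) ^ r * (2^b) ^ (w - (r+k))) := by ring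
        _ = (2 ^ b - b) ^ B.count b * (2^b) ^ (w - k) := by rw [← pow_add, h5]
        _ = (2 ^ b - b) ^ B.count b * 2 ^ (b * (w - k)) := by rw [← pow_mul]
  · set s := w - r with hs
    set M : List (Option ℕ) :=
      (B.drop s).map some ++ (List.replicate (w - k) none ++ (B.take s).map some) with hM
    have hMlen : M.length = w := by simp [hM, hlen]; omega
    refine le_trans (perR_aux b (b+1) w hc M hMlen _ ?_) (le_of_eq ?_)
    · intro i hi hcond
      set P := lexBlock (b+1) w i with hPdef
      have hP : P.length = w := lexBlock_length _ _ _
      rw [List.isPrefixOf_iff_prefix, drop_PP P w r hP hr] at hcond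
      have hdl : (P.drop r).length = s := by rw [List.length_drop, hP]
      have hBeq : B = P.drop r ++ P.take (k - s) := by
        have h1 := List.prefix_iff_eq_take.mp hcond
        rw [hlen, List.take_append,
          List.take_of_length_le (by rw [hdl]; omega), hdl] at h1
        exact h1
      have hBtake : B.take s = P.drop r := by
        rw [hBeq, List.take_append, List.take_of_length_le (by rw [hdl]),
          hdl, Nat.sub_self, List.take_zero, List.append_nil]
      have hBdrop : B.drop s = P.take (k - s) := by
        rw [hBeq, List.drop_append, List.drop_of_length_le (by rw [hdl]),
          hdl, Nat.sub_self, List.drop_zero, List.nil_append]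
      have hPdec : P = P.take (k - s) ++ ((P.take r).drop (k - s) ++ P.drop r) := by
        conv_lhs => rw [← List.take_append_drop r P,
          ← List.take_append_drop (k - s) (P.take r)]
        rw [List.take_take, min_eq_left (by omega : k - s ≤ r), List.append_assoc]
      have hl1 : ((P.take r).drop (k - s)).length = w - k := by
        rw [List.length_drop, List.length_take, hP]; omega
      have hres := mmatch_sn (P.take (k - s)) (P.drop r) ((P.take r).drop (k - s))
      rw [← hPdec, hl1, ← hBdrop, ← hBtake] at hres
      rw [hM]
      exact hres
    · have hcomp : (mW b (b+1)) ∘ some = wtD b := funext fun a => rfl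
      rw [hM]
      rw [List.map_append, List.map_append, List.prod_append, List.prod_append,
        List.map_replicate, List.prod_replicate, List.map_map, List.map_map, hcomp]
      show (Wb b (B.drop s)) * ((mW b (b+1) none) ^ (w - k) * (Wb b (B.take s))) = _
      have hnone : mW b (b+1) none = 2 ^ b := sum_wtD b
      have hWB : Wb b (B.take s) * Wb b (B.drop s) = Wb b B := by
        rw [← Wb_append, List.take_append_drop]
      rw [hnone]
      calc Wb b (B.drop s) * ((2^b) ^ (w - k) * Wb b (B.take s))
          = (Wb b (B.take s) * Wb b (B.drop s)) * (2^b) ^ (w - k) := by ring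
        _ = Wb b B * (2^b) ^ (w - k) := by rw [hWB]
        _ = (2 ^ b - b) ^ B.count b * 2 ^ (b * (w - k)) := by
            rw [Wb_eq_pow_count, ← pow_mul]


lemma list_range_sum (f : ℕ → ℕ) (n : ℕ) :
    ((List.range n).map f).sum = ∑ i ∈ Finset.range n, f i := by
  induction n with
  | zero => simp
  | succ n ih => rw [List.range_succ, List.map_append, List.sum_append,
      Finset.sum_range_succ, ih]; simp

/-- If `w, k, b` are positive integers with `k ≤ w` and `B` is a block of length `k`
in base `b+1`, then `N(B, P_{b,w}) ≤ w·(2^b - b)^{g_b(B)}·2^{b(w-k)} + (k-1)·(b+1)^w`. -/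
theorem stmt3 (w k b : ℕ) (hw : 0 < w) (hk : 0 < k) (hb : 0 < b) (hkw : k ≤ w)
    (B : List ℕ) (hlen : B.length = k) (hbase : ∀ d ∈ B, d < b + 1) :
    numOcc B (Pblock b w) ≤
      w * (2 ^ b - b) ^ B.count b * 2 ^ (b * (w - k)) + (k - 1) * (b + 1) ^ w := by
  have hkB : 0 < B.length := by rw [hlen]; exact hk
  set N := (b + 1) ^ w with hN
  set G : ℕ → List ℕ := fun i =>
    (List.replicate ((2 ^ b - b) ^ ((lexBlock (b + 1) w i).count b))
      (lexBlock (b + 1) w i)).flatten with hG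
  have hPb : Pblock b w = ((List.range N).map G).flatten := rfl
  have h1 : numOcc B (Pblock b w) ≤
      (∑ i ∈ Finset.range N, numOcc B (G i)) + (k - 1) * N := by
    rw [hPb]
    have := numOcc_flatten_le B hkB ((List.range N).map G)
    rw [List.map_map, List.length_map, List.length_range, hlen,
      list_range_sum (numOcc B ∘ G) N] at this
    exact this
  have h2 : ∀ i, numOcc B (G i) ≤
      (2 ^ b - b) ^ ((lexBlock (b + 1) w i).count b) *
        ((Finset.range w).filter (fun r => B.isPrefixOf
          ((lexBlock (b + 1) w i ++ lexBlock (b + 1) w i).drop r))).card := by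
    intro i
    rw [numOcc_eq]
    exact numOcc_period_le' B (lexBlock (b + 1) w i) w _
      (lexBlock_length _ _ _) hw hkB (hlen ▸ hkw)
  have h3 : (∑ i ∈ Finset.range N, numOcc B (G i)) ≤
      w * ((2 ^ b - b) ^ B.count b * 2 ^ (b * (w - k))) := by
    calc (∑ i ∈ Finset.range N, numOcc B (G i))
        ≤ ∑ i ∈ Finset.range N, (2 ^ b - b) ^ ((lexBlock (b + 1) w i).count b) *
            ((Finset.range w).filter (fun r => B.isPrefixOf
              ((lexBlock (b + 1) w i ++ lexBlock (b + 1) w i).drop r))).card :=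
          Finset.sum_le_sum fun i _ => h2 i
      _ = ∑ i ∈ Finset.range N, ∑ r ∈ Finset.range w,
            (if B.isPrefixOf ((lexBlock (b + 1) w i ++ lexBlock (b + 1) w i).drop r)
              then Wb b (lexBlock (b + 1) w i) else 0) := by
          refine Finset.sum_congr rfl fun i _ => ?_
          rw [Finset.card_filter, Finset.mul_sum, ← Wb_eq_pow_count]
          refine Finset.sum_congr rfl fun r _ => ?_
          split <;> simp
      _ = ∑ r ∈ Finset.range w, ∑ i ∈ Finset.range N,
            (if B.isPrefixOf ((lexBlock (b + 1) w i ++ lexBlock (b + 1) w i).drop r)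
              then Wb b (lexBlock (b + 1) w i) else 0) := Finset.sum_comm
      _ ≤ ∑ r ∈ Finset.range w, (2 ^ b - b) ^ B.count b * 2 ^ (b * (w - k)) := by
          refine Finset.sum_le_sum fun r hr => ?_
          rw [Finset.mem_range] at hr
          exact perR b w k r B hb hw hk hkw hlen hr
      _ = w * ((2 ^ b - b) ^ B.count b * 2 ^ (b * (w - k))) := by
          rw [Finset.sum_const, Finset.card_range, smul_eq_mul]
  calc numOcc B (Pblock b w) ≤ (∑ i ∈ Finset.range N, numOcc B (G i)) + (k - 1) * N := h1
    _ ≤ w * ((2 ^ b - b) ^ B.count b * 2 ^ (b * (w - k))) + (k - 1) * N := by omega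
    _ = w * (2 ^ b - b) ^ B.count b * 2 ^ (b * (w - k)) + (k - 1) * (b + 1) ^ w := by
        rw [mul_assoc, hN]
end

section
/- Define blocks x_i and integers b_i, l_i by: for i ≤ 5, x_i = (0,1), b_i = 2, l_i = 0; for i ≥ 6, x_i = P_{i,i²}, b_i = 2^i, l_i = 2^{4i²}. Let (E_1,E_2,...) be the concatenation l_1x_1 l_2x_2 l_3x_3 ..., let L_i = Σ_{j=1}^i l_j|x_j|, let q_n = b_i for L_{i−1} < n ≤ L_i, let Q = {q_n}, and let x = Σ_{n=1}^∞ E_n/(q_1···q_n). Then x is not Q-distribution normal. -/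
/-- The blocks of the construction: `x_i = (0,1)` for `i ≤ 5` and `x_i = P_{i,i²}` for `i ≥ 6`. -/
def xSeq (i : ℕ) : List ℕ := if i ≤ 5 then [0, 1] else Pblock i (i ^ 2)

/-- The bases of the construction: `b_i = 2` for `i ≤ 5` and `b_i = 2^i` for `i ≥ 6`. -/
def bSeq (i : ℕ) : ℕ := if i ≤ 5 then 2 else 2 ^ i

/-- The repetition counts: `l_i = 0` for `i ≤ 5` and `l_i = 2^{4i²}` for `i ≥ 6`. -/
def lSeq (i : ℕ) : ℕ := if i ≤ 5 then 0 else 2 ^ (4 * i ^ 2)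

/-- `L_i = Σ_{j=1}^i l_j·|x_j|`. -/
def Lsum (i : ℕ) : ℕ := ∑ j ∈ Finset.Icc 1 i, lSeq j * (xSeq j).length

/-- The concatenation `l_1x_1 l_2x_2 … l_ix_i` (a block of length `L_i`). -/
def prefixUpTo (i : ℕ) : List ℕ :=
  ((List.range i).map fun j => (List.replicate (lSeq (j + 1)) (xSeq (j + 1))).flatten).flatten

/-- For `n ≥ 1`, the unique index `i` with `L_{i-1} < n ≤ L_i`. -/
noncomputable def iOf (n : ℕ) : ℕ := sInf {i | n ≤ Lsum i}

/-- The digit sequence `(E_1, E_2, …) = l_1x_1 l_2x_2 …` (1-indexed): `E n` is the `n`-th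
entry of the infinite concatenation. -/
noncomputable def Edig (n : ℕ) : ℕ := (prefixUpTo (iOf n)).getD (n - 1) 0

/-- The basic sequence `Q` (1-indexed): `q_n = b_i` for `L_{i-1} < n ≤ L_i`. -/
noncomputable def qSeq (n : ℕ) : ℕ := bSeq (iOf n)

/-- The real number `x = Σ_{n=1}^∞ E_n / (q_1 ⋯ q_n)`. -/
noncomputable def xVal : ℝ :=
  ∑' n : ℕ, (Edig (n + 1) : ℝ) / ∏ m ∈ Finset.range (n + 1), (qSeq (m + 1) : ℝ)

/-- `T_{Q,n}(x) = q_1 ⋯ q_n · x (mod 1)`. -/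
noncomputable def TQ (q : ℕ → ℕ) (x : ℝ) (n : ℕ) : ℝ :=
  Int.fract ((∏ m ∈ Finset.range n, (q (m + 1) : ℝ)) * x)

/-- A sequence `u` of real numbers is uniformly distributed mod 1. -/
def UDMod1 (u : ℕ → ℝ) : Prop :=
  ∀ a b : ℝ, 0 ≤ a → a < b → b ≤ 1 →
    Filter.Tendsto
      (fun N => (((Finset.range N).filter fun n =>
        a ≤ Int.fract (u n) ∧ Int.fract (u n) < b).card : ℝ) / N)
      Filter.atTop (nhds (b - a))

-- entries of lexBlock are < b
lemma lexBlock_lt {b w i a : ℕ} (hb : 0 < b) (ha : a ∈ lexBlock b w i) : a < b := by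
  unfold lexBlock at ha
  simp only [List.mem_map, List.mem_range] at ha
  obtain ⟨j, _, rfl⟩ := ha
  exact Nat.mod_lt _ hb

lemma Pblock_entry_le {b w a : ℕ} (ha : a ∈ Pblock b w) : a ≤ b := by
  unfold Pblock at ha
  simp only [List.mem_flatten, List.mem_map, List.mem_range, List.mem_replicate] at ha
  obtain ⟨l, ⟨i, _, rfl⟩, hal⟩ := ha
  rw [List.mem_flatten] at hal
  obtain ⟨l', hl', hal'⟩ := hal
  rw [List.mem_replicate] at hl'
  rw [hl'.2] at hal'
  exact Nat.lt_succ_iff.mp (lexBlock_lt (Nat.succ_pos b) hal')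

lemma xSeq_entry_le {k a : ℕ} (hk : 1 ≤ k) (ha : a ∈ xSeq k) : a ≤ k := by
  unfold xSeq at ha
  split_ifs at ha with h
  · simp only [List.mem_cons, List.mem_singleton, List.not_mem_nil, or_false] at ha
    rcases ha with rfl | rfl
    · exact Nat.zero_le _
    · exact hk
  · exact Pblock_entry_le ha

lemma prefixUpTo_entry_le {i a : ℕ} (ha : a ∈ prefixUpTo i) : a ≤ i := by
  unfold prefixUpTo at ha
  simp only [List.mem_flatten, List.mem_map, List.mem_range] at ha
  obtain ⟨l, ⟨j, hj, rfl⟩, hal⟩ := ha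
  rw [List.mem_flatten] at hal
  obtain ⟨l', hl', hal'⟩ := hal
  rw [List.mem_replicate] at hl'
  rw [hl'.2] at hal'
  exact le_trans (xSeq_entry_le (Nat.succ_le_succ (Nat.zero_le j)) hal') hj

lemma zero_mem_Pblock {b w : ℕ} (hb : 1 ≤ b) (hw : 1 ≤ w) : 0 ∈ Pblock b w := by
  unfold Pblock
  simp only [List.mem_flatten, List.mem_map, List.mem_range]
  refine ⟨_, ⟨0, pow_pos (Nat.succ_pos b) w, rfl⟩, ?_⟩
  have hlex : lexBlock (b + 1) w 0 = List.replicate w 0 := by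
    unfold lexBlock
    rw [List.eq_replicate_iff]
    constructor
    · simp
    · intro x hx
      simp only [List.mem_map, List.mem_range] at hx
      obtain ⟨j, _, rfl⟩ := hx
      simp
  rw [hlex]
  have hcount : (List.replicate w 0).count b = 0 := by
    have hb0 : b ≠ 0 := by omega
    simp [List.count_replicate, hb0]
    omega
  rw [hcount, pow_zero]
  simp only [List.mem_flatten, List.mem_replicate]
  exact ⟨List.replicate w 0, ⟨one_ne_zero, rfl⟩, List.mem_replicate.mpr ⟨by omega, rfl⟩⟩

lemma Lsum_le5 {i : ℕ} (hi : i ≤ 5) : Lsum i = 0 := by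
  unfold Lsum
  apply Finset.sum_eq_zero
  intro j hj
  rw [Finset.mem_Icc] at hj
  have : lSeq j = 0 := by unfold lSeq; rw [if_pos (le_trans hj.2 hi)]
  simp [this]

lemma le_Lsum (m : ℕ) : m ≤ Lsum (m + 6) := by
  have h6 : ¬ (m + 6 ≤ 5) := by omega
  have hlen : 1 ≤ (xSeq (m + 6)).length := by
    rw [show xSeq (m+6) = Pblock (m+6) ((m+6)^2) by unfold xSeq; rw [if_neg h6]]
    exact List.length_pos_iff.mpr (List.ne_nil_of_mem (zero_mem_Pblock (by omega) (by nlinarith)))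
  have key : lSeq (m + 6) * (xSeq (m + 6)).length ≤ Lsum (m + 6) := by
    apply Finset.single_le_sum (f := fun j => lSeq j * (xSeq j).length)
    · intro j _; exact Nat.zero_le _
    · rw [Finset.mem_Icc]; omega
  have hl : lSeq (m + 6) = 2 ^ (4 * (m + 6) ^ 2) := by unfold lSeq; rw [if_neg h6]
  have hm : m ≤ 2 ^ (4 * (m + 6) ^ 2) := by
    calc m ≤ 2 ^ m := Nat.le_of_lt (Nat.lt_two_pow_self (n := m))
    _ ≤ 2 ^ (4 * (m + 6) ^ 2) := Nat.pow_le_pow_right (by norm_num) (by nlinarith)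
  calc m ≤ 2 ^ (4 * (m + 6) ^ 2) * 1 := by omega
  _ ≤ lSeq (m + 6) * (xSeq (m + 6)).length := by rw [hl]; exact Nat.mul_le_mul_left _ hlen
  _ ≤ Lsum (m + 6) := key

lemma iOf_ge6 {m : ℕ} (hm : 1 ≤ m) : 6 ≤ iOf m := by
  have hne : {i | m ≤ Lsum i}.Nonempty := ⟨m + 6, le_Lsum m⟩
  have hmem := Nat.sInf_mem hne
  by_contra h
  push_neg at h
  have h0 : Lsum (iOf m) = 0 := Lsum_le5 (by omega)
  have h1 : m ≤ Lsum (iOf m) := hmem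
  omega

lemma Edig_le (n : ℕ) : Edig n ≤ iOf n := by
  unfold Edig
  by_cases h : n - 1 < (prefixUpTo (iOf n)).length
  · rw [List.getD_eq_getElem _ _ h]
    exact prefixUpTo_entry_le (List.getElem_mem h)
  · rw [List.getD_eq_default _ _ (le_of_not_gt h)]
    exact Nat.zero_le _

lemma qSeq_eq {n : ℕ} (hn : 1 ≤ n) : qSeq n = 2 ^ (iOf n) := by
  unfold qSeq bSeq
  rw [if_neg (by have := iOf_ge6 hn; omega)]

lemma eight_mul_le {i : ℕ} (hi : 6 ≤ i) : 8 * i ≤ 2 ^ i := by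
  induction i with
  | zero => omega
  | succ n ih =>
    rcases Nat.lt_or_ge n 6 with h | h
    · have hn : n = 5 := by omega
      subst hn; norm_num
    · have h1 := ih h
      have h2 : 8 ≤ 2 ^ n := le_trans (by omega) h1
      have h3 : 2 ^ (n + 1) = 2 * 2 ^ n := by ring
      omega

lemma Edig_mul8_le {n : ℕ} (hn : 1 ≤ n) : 8 * Edig n ≤ qSeq n := by
  rw [qSeq_eq hn]
  calc 8 * Edig n ≤ 8 * iOf n := by have := Edig_le n; omega
  _ ≤ 2 ^ (iOf n) := eight_mul_le (iOf_ge6 hn)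

open Finset

noncomputable def fTerm (m : ℕ) : ℝ :=
  (Edig (m + 1) : ℝ) / ∏ k ∈ Finset.range (m + 1), (qSeq (k + 1) : ℝ)

lemma qR_pos (k : ℕ) : (0 : ℝ) < (qSeq (k + 1) : ℝ) := by
  rw [qSeq_eq (Nat.le_add_left 1 k)]
  positivity

lemma qR_ge2 (k : ℕ) : (2 : ℝ) ≤ (qSeq (k + 1) : ℝ) := by
  rw [qSeq_eq (Nat.le_add_left 1 k)]
  have h6 := iOf_ge6 (Nat.le_add_left 1 k)
  calc (2:ℝ) = 2 ^ 1 := (pow_one 2).symm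
  _ ≤ 2 ^ (iOf (k + 1)) := by
      apply pow_le_pow_right₀ (by norm_num); omega
  _ = ((2 ^ (iOf (k+1)) : ℕ) : ℝ) := by push_cast; ring

lemma EdigR_le (m : ℕ) : 8 * (Edig (m + 1) : ℝ) ≤ (qSeq (m + 1) : ℝ) := by
  have := Edig_mul8_le (Nat.le_add_left 1 m)
  exact_mod_cast this

lemma prodQ_pos (n : ℕ) : (0:ℝ) < ∏ k ∈ Finset.range n, (qSeq (k + 1) : ℝ) :=
  Finset.prod_pos fun k _ => qR_pos k

lemma prodIco_ge {a b : ℕ} (h : a ≤ b) :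
    (2:ℝ) ^ (b - a) ≤ ∏ k ∈ Finset.Ico a b, (qSeq (k + 1) : ℝ) := by
  calc (2:ℝ) ^ (b - a) = ∏ k ∈ Finset.Ico a b, (2:ℝ) := by
        rw [Finset.prod_const, Nat.card_Ico]
  _ ≤ _ := Finset.prod_le_prod (fun k _ => by norm_num) (fun k _ => qR_ge2 k)

lemma fTerm_nonneg (m : ℕ) : 0 ≤ fTerm m := by
  unfold fTerm
  exact div_nonneg (Nat.cast_nonneg _) (le_of_lt (prodQ_pos (m + 1)))

lemma fTerm_le (m : ℕ) : fTerm m ≤ (1/8) * (1/2) ^ m := by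
  unfold fTerm
  have hsplit : ∏ k ∈ Finset.range (m + 1), (qSeq (k + 1) : ℝ)
      = (∏ k ∈ Finset.range m, (qSeq (k + 1) : ℝ)) * (qSeq (m + 1) : ℝ) :=
    Finset.prod_range_succ _ m
  rw [hsplit]
  have hd : (2:ℝ) ^ m * (qSeq (m+1) : ℝ) ≤ (∏ k ∈ Finset.range m, (qSeq (k + 1) : ℝ)) * (qSeq (m + 1) : ℝ) := by
    apply mul_le_mul_of_nonneg_right _ (le_of_lt (qR_pos m))
    calc (2:ℝ)^m = ∏ k ∈ Finset.range m, (2:ℝ) := by rw [Finset.prod_const, Finset.card_range]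
    _ ≤ _ := Finset.prod_le_prod (fun k _ => by norm_num) (fun k _ => qR_ge2 k)
  have hnum : (Edig (m+1) : ℝ) ≤ (qSeq (m+1) : ℝ) / 8 := by
    have := EdigR_le m; linarith
  calc (Edig (m+1) : ℝ) / ((∏ k ∈ Finset.range m, (qSeq (k + 1) : ℝ)) * (qSeq (m + 1) : ℝ))
      ≤ ((qSeq (m+1) : ℝ) / 8) / ((2:ℝ) ^ m * (qSeq (m+1) : ℝ)) := by
        have hq := qR_pos m
        apply div_le_div₀ (by positivity) hnum (by positivity) hd
  _ = (1/8) * (1/2) ^ m := by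
        have := qR_pos m
        rw [one_div_pow]
        field_simp
  _ ≤ (1/8) * (1/2) ^ m := le_refl _

lemma fTerm_summable : Summable fTerm := by
  apply Summable.of_nonneg_of_le fTerm_nonneg fTerm_le
  exact (summable_geometric_of_lt_one (by norm_num) (by norm_num)).mul_left _

lemma TQ_le (n : ℕ) : TQ qSeq xVal n ≤ 1/4 := by
  set P : ℝ := ∏ k ∈ Finset.range n, (qSeq (k + 1) : ℝ) with hP
  have hPx : P * xVal = ∑' m, P * fTerm m := by
    rw [tsum_mul_left]; rfl
  have hg : Summable (fun m => P * fTerm m) := fTerm_summable.mul_left P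
  have hsplit := Summable.sum_add_tsum_nat_add (f := fun m => P * fTerm m) n hg
  -- A : the head sum is a natural number
  have hhead : ∀ m ∈ Finset.range n, P * fTerm m
      = ((Edig (m+1) * ∏ k ∈ Finset.Ico (m+1) n, qSeq (k+1) : ℕ) : ℝ) := by
    intro m hm
    rw [Finset.mem_range] at hm
    unfold fTerm
    have hprod : (∏ k ∈ Finset.range (m+1), (qSeq (k+1) : ℝ)) * ∏ k ∈ Finset.Ico (m+1) n, (qSeq (k+1) : ℝ) = P := by
      rw [hP]; exact Finset.prod_range_mul_prod_Ico _ hm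
    have hpm : (0:ℝ) < ∏ k ∈ Finset.range (m+1), (qSeq (k+1) : ℝ) := prodQ_pos (m+1)
    push_cast
    rw [← hprod]
    field_simp
  have hA : ∑ m ∈ Finset.range n, P * fTerm m
      = ((∑ m ∈ Finset.range n, Edig (m+1) * ∏ k ∈ Finset.Ico (m+1) n, qSeq (k+1) : ℕ) : ℝ) := by
    rw [Finset.sum_congr rfl hhead]
    push_cast
    ring
  set A : ℕ := ∑ m ∈ Finset.range n, Edig (m+1) * ∏ k ∈ Finset.Ico (m+1) n, qSeq (k+1) with hAdef
  set r : ℝ := ∑' j, P * fTerm (j + n) with hr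
  have hxA : P * xVal = (A : ℝ) + r := by
    rw [hPx, ← hsplit, hA]
  -- bound each tail term
  have htail_le : ∀ j, P * fTerm (j + n) ≤ (1/8) * (1/2) ^ j := by
    intro j
    unfold fTerm
    have hprod : P * ∏ k ∈ Finset.Ico n (j + n + 1), (qSeq (k+1) : ℝ)
        = ∏ k ∈ Finset.range (j + n + 1), (qSeq (k+1) : ℝ) := by
      rw [hP]; exact Finset.prod_range_mul_prod_Ico _ (by omega)
    have hIco : ∏ k ∈ Finset.Ico n (j + n + 1), (qSeq (k+1) : ℝ)
        = (∏ k ∈ Finset.Ico n (j + n), (qSeq (k+1) : ℝ)) * (qSeq (j + n + 1) : ℝ) :=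
      Finset.prod_Ico_succ_top (by omega) _
    have hP0 : (0:ℝ) < P := prodQ_pos n
    have hstep : P * ((Edig (j + n + 1) : ℝ) / ∏ k ∈ Finset.range (j + n + 1), (qSeq (k+1) : ℝ))
        = (Edig (j + n + 1) : ℝ) / ∏ k ∈ Finset.Ico n (j + n + 1), (qSeq (k+1) : ℝ) := by
      rw [← hprod]
      have h1 : (0:ℝ) < ∏ k ∈ Finset.Ico n (j + n + 1), (qSeq (k+1) : ℝ) :=
        Finset.prod_pos fun k _ => qR_pos k
      field_simp
    rw [hstep, hIco]
    have hnum : (Edig (j + n + 1) : ℝ) ≤ (qSeq (j + n + 1) : ℝ) / 8 := by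
      have := EdigR_le (j + n); linarith
    have hden : (2:ℝ) ^ j * (qSeq (j + n + 1) : ℝ)
        ≤ (∏ k ∈ Finset.Ico n (j + n), (qSeq (k+1) : ℝ)) * (qSeq (j + n + 1) : ℝ) := by
      apply mul_le_mul_of_nonneg_right _ (le_of_lt (qR_pos (j + n)))
      have := prodIco_ge (a := n) (b := j + n) (by omega)
      simpa [Nat.add_sub_cancel] using this
    calc (Edig (j + n + 1) : ℝ) / ((∏ k ∈ Finset.Ico n (j + n), (qSeq (k+1) : ℝ)) * (qSeq (j + n + 1) : ℝ))
        ≤ ((qSeq (j + n + 1) : ℝ) / 8) / ((2:ℝ) ^ j * (qSeq (j + n + 1) : ℝ)) :=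
        div_le_div₀ (by positivity) hnum (by have hq := qR_pos (j+n); positivity) hden
    _ = (1/8) * (1/2) ^ j := by
        have := qR_pos (j + n)
        rw [one_div_pow]
        field_simp
  have htail_nonneg : ∀ j, 0 ≤ P * fTerm (j + n) :=
    fun j => mul_nonneg (le_of_lt (prodQ_pos n)) (fTerm_nonneg _)
  have hr_nonneg : 0 ≤ r := tsum_nonneg htail_nonneg
  have hr_le : r ≤ 1/4 := by
    have hsum2 : Summable (fun j : ℕ => (1/8 : ℝ) * (1/2) ^ j) :=
      (summable_geometric_of_lt_one (by norm_num) (by norm_num)).mul_left _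
    calc r ≤ ∑' j, (1/8 : ℝ) * (1/2) ^ j := by
          apply Summable.tsum_le_tsum htail_le _ hsum2
          exact (fTerm_summable.mul_left P).comp_injective (add_left_injective n) |>.congr (fun j => rfl)
    _ = (1/8) * (1 - 1/2)⁻¹ := by
          rw [tsum_mul_left, tsum_geometric_of_lt_one (by norm_num) (by norm_num)]
    _ = 1/4 := by norm_num
  unfold TQ
  show Int.fract (P * xVal) ≤ 1/4
  rw [hxA, Int.fract_natCast_add, Int.fract_eq_self.mpr ⟨hr_nonneg, by linarith⟩]
  exact hr_le

/-- For the construction `x_i = (0,1)`, `b_i = 2`, `l_i = 0` for `i ≤ 5` and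
`x_i = P_{i,i²}`, `b_i = 2^i`, `l_i = 2^{4i²}` for `i ≥ 6`, the number `x` is not
`Q`-distribution normal, i.e. the sequence `{T_{Q,n}(x)}_{n=0}^∞` is not u.d. mod 1. -/
theorem stmt8 : ¬ UDMod1 (TQ qSeq xVal) := by
  intro h
  have h1 := h (1/2) 1 (by norm_num) (by norm_num) le_rfl
  have h2 : ∀ N : ℕ, (((Finset.range N).filter fun n =>
      (1:ℝ)/2 ≤ Int.fract (TQ qSeq xVal n) ∧ Int.fract (TQ qSeq xVal n) < 1).card : ℝ) / N = 0 := by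
    intro N
    have hempty : ((Finset.range N).filter fun n =>
        (1:ℝ)/2 ≤ Int.fract (TQ qSeq xVal n) ∧ Int.fract (TQ qSeq xVal n) < 1) = ∅ := by
      apply Finset.filter_eq_empty_iff.mpr
      intro n _
      have hle : TQ qSeq xVal n ≤ 1/4 := TQ_le n
      have hfr : Int.fract (TQ qSeq xVal n) = TQ qSeq xVal n := Int.fract_fract _
      rw [hfr]
      intro hcon
      linarith [hcon.1]
    rw [hempty]
    simp
  have h3 : Filter.Tendsto (fun N : ℕ => (((Finset.range N).filter fun n =>
      (1:ℝ)/2 ≤ Int.fract (TQ qSeq xVal n) ∧ Int.fract (TQ qSeq xVal n) < 1).card : ℝ) / N)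
      Filter.atTop (nhds 0) := by
    simp only [h2]
    exact tendsto_const_nhds
  have := tendsto_nhds_unique h1 h3
  norm_num at this
end
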